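/- For every topological space B, the topological complexity TC(B) equals cat*_B(d(B)) + 1, as an equality in ℕ∞ (with the convention ∞ + 1 = ∞). In particular, for every m ≥ 0, B × B can be covered by m + 1 open sets each admitting a continuous section of π if and only if B × B can be covered by m + 1 open sets each fibrewise compressible into the diagonal. -/

import Mathlib

open unitInterval

/-- An open (or arbitrary) subset `U ⊆ B × B` admits a continuous section of the
path fibration `π : P(B) → B × B`, `π(ℓ) = (ℓ(0), ℓ(1))`. -/
def HasPathSection (B : Type) [TopologicalSpace B] (U : Set (B × B)) : Prop :=
  ∃ s : C(↥U, C(I, B)), ∀ x : ↥U, s x 0 = (x : B × B).1 ∧ s x 1 = (x : B × B).2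

/-- `B × B` is covered by `n` open subsets, each admitting a continuous section of `π`. -/
def SecCover (B : Type) [TopologicalSpace B] (n : ℕ) : Prop :=
  ∃ U : Fin n → Set (B × B), (∀ i, IsOpen (U i)) ∧ (⋃ i, U i) = Set.univ ∧
    ∀ i, HasPathSection B (U i)

/-- The topological complexity of `B`, as an element of `ℕ∞`. -/
noncomputable def topComplexity (B : Type) [TopologicalSpace B] : ℕ∞ :=
  sInf {n : ℕ∞ | ∃ m : ℕ, n = m ∧ 1 ≤ m ∧ SecCover B m}

/-- `U ⊆ B × B` is fibrewise compressible into the diagonal: there is a homotopy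
`H` from the inclusion ending in the diagonal, whose second coordinate is constant. -/
def FibDiagCompressible (B : Type) [TopologicalSpace B] (U : Set (B × B)) : Prop :=
  ∃ H : C(↥U × I, B × B),
    (∀ x : ↥U, H (x, 0) = (x : B × B)) ∧
    (∀ x : ↥U, (H (x, 1)).1 = (H (x, 1)).2) ∧
    (∀ (x : ↥U) (t : I), (H (x, t)).2 = (x : B × B).2)

/-- `B × B` is covered by `n` open subsets, each fibrewise compressible into the diagonal. -/
def CompCover (B : Type) [TopologicalSpace B] (n : ℕ) : Prop :=
  ∃ U : Fin n → Set (B × B), (∀ i, IsOpen (U i)) ∧ (⋃ i, U i) = Set.univ ∧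
    ∀ i, FibDiagCompressible B (U i)

/-- The fibrewise unpointed L-S category of the fibrewise pointed space
`d(B) = (B × B, pr₂, Δ)`, as an element of `ℕ∞`. -/
noncomputable def catStarDiag (B : Type) [TopologicalSpace B] : ℕ∞ :=
  sInf {n : ℕ∞ | ∃ m : ℕ, n = m ∧ CompCover B (m + 1)}

/-- A subset admits a continuous section of `π` iff it is fibrewise compressible
into the diagonal. -/
theorem hasPathSection_iff_fibDiagCompressible (B : Type) [TopologicalSpace B]
    (U : Set (B × B)) : HasPathSection B U ↔ FibDiagCompressible B U := by
  constructor
  · rintro ⟨s, hs⟩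
    refine ⟨⟨fun p => (s p.1 p.2, ((p.1 : B × B)).2), by fun_prop⟩, ?_, ?_, ?_⟩
    · intro x; simp [(hs x).1]
    · intro x; simp [(hs x).2]
    · intro x t; rfl
  · rintro ⟨H, h0, h1, h2⟩
    refine ⟨(ContinuousMap.fst.comp H).curry, fun x => ⟨?_, ?_⟩⟩
    · have := h0 x; simpa [ContinuousMap.curry] using congrArg Prod.fst this
    · have := (h1 x).trans (h2 x 1); simpa [ContinuousMap.curry] using this

theorem secCover_iff_compCover (B : Type) [TopologicalSpace B] (n : ℕ) :
    SecCover B n ↔ CompCover B n := by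
  constructor
  · rintro ⟨U, hO, hc, hs⟩
    exact ⟨U, hO, hc, fun i => (hasPathSection_iff_fibDiagCompressible B (U i)).mp (hs i)⟩
  · rintro ⟨U, hO, hc, hs⟩
    exact ⟨U, hO, hc, fun i => (hasPathSection_iff_fibDiagCompressible B (U i)).mpr (hs i)⟩

/-- `TC(B) = cat*_B(d(B)) + 1`, and for every `m ≥ 0`, `B × B` is covered by `m + 1`
open sets admitting sections of `π` iff it is covered by `m + 1` open sets fibrewise
compressible into the diagonal. -/
theorem TC_eq_catStarDiag_add_one (B : Type) [TopologicalSpace B] :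
    topComplexity B = catStarDiag B + 1 ∧
    ∀ m : ℕ, SecCover B (m + 1) ↔ CompCover B (m + 1) := by
  have hiff : ∀ n, SecCover B n ↔ CompCover B n := secCover_iff_compCover B
  refine ⟨?_, fun m => hiff (m + 1)⟩
  set S : Set ℕ∞ := {n : ℕ∞ | ∃ m : ℕ, n = m ∧ 1 ≤ m ∧ SecCover B m} with hS
  set T : Set ℕ∞ := {n : ℕ∞ | ∃ m : ℕ, n = m ∧ CompCover B (m + 1)} with hT
  have key : ∀ n : ℕ∞, n ∈ S ↔ ∃ k : ℕ, n = (k : ℕ∞) + 1 ∧ CompCover B (k + 1) := by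
    intro n
    constructor
    · rintro ⟨m, rfl, hm, hsec⟩
      obtain ⟨k, rfl⟩ := Nat.exists_eq_add_of_le hm
      exact ⟨k, by push_cast; ring, (hiff (k + 1)).mp (by simpa [Nat.add_comm] using hsec)⟩
    · rintro ⟨k, rfl, hcomp⟩
      exact ⟨k + 1, by push_cast; ring, Nat.le_add_left 1 k, (hiff (k + 1)).mpr hcomp⟩
  show sInf S = sInf T + 1
  apply le_antisymm
  · rcases Set.eq_empty_or_nonempty T with hTe | hTne
    · have : sInf T = ⊤ := by rw [hTe, sInf_empty]
      simp [this]
    · obtain ⟨k, hk, hcomp⟩ := csInf_mem hTne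
      have : sInf T + 1 ∈ S := (key _).mpr ⟨k, by rw [hk], hcomp⟩
      exact sInf_le this
  · refine le_sInf fun n hn => ?_
    obtain ⟨k, rfl, hcomp⟩ := (key n).mp hn
    have : (k : ℕ∞) ∈ T := ⟨k, rfl, hcomp⟩
    exact add_le_add_left (sInf_le this) 1
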